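/- Fix a positive real ε, an integer n ≥ 1, and probability distributions. If p is a distribution on X×Y×Z such that for some sequence z^n the conditional typical sets factor, i.e. T_ε^n(X|z^n)[p] × T_ε^n(Y|z^n)[p] = T_ε^n(XY|z^n)[p], and this common set is nonempty, and if p' is the Markov-chain distribution p'(x,y,z) = p_Z(z)·p(x|z)·p(y|z) built from the marginals and conditionals of p, then any pair (x^n, y^n) with x^n ∈ T_ε^n(X|z^n)[p] and y^n ∈ T_ε^n(Y|z^n)[p] satisfies (x^n, y^n, z^n) ∈ T_ε^n(XYZ)[p]; consequently if additionally (x^n,y^n,z^n) ∈ T_ε^n(XYZ)[p'], then ||p − p'||₁ < 2ε. -/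

import Mathlib

section

variable {X Y Z : Type*} [Fintype X] [Fintype Y] [Fintype Z]
  [DecidableEq X] [DecidableEq Y] [DecidableEq Z]

/-- Number of positions where the pair of sequences takes the value `(x, z)`. -/
def cnt2 {n : ℕ} (xn : Fin n → X) (zn : Fin n → Z) (x : X) (z : Z) : ℕ :=
  (Finset.univ.filter fun i => xn i = x ∧ zn i = z).card

/-- Number of positions where the triple of sequences takes the value `(x, y, z)`. -/
def cnt3 {n : ℕ} (xn : Fin n → X) (yn : Fin n → Y) (zn : Fin n → Z)
    (x : X) (y : Y) (z : Z) : ℕ :=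
  (Finset.univ.filter fun i => xn i = x ∧ yn i = y ∧ zn i = z).card

/-- `xn ∈ T_ε^n(X | zn)[p]`: conditional strong typicality of `xn` given `zn`. -/
def condTypX {n : ℕ} (p : X × Y × Z → ℝ) (ε : ℝ) (zn : Fin n → Z) (xn : Fin n → X) : Prop :=
  ∀ x z, |(cnt2 xn zn x z : ℝ) / n - ∑ y, p (x, y, z)|
    < ε / ((Fintype.card X : ℝ) * (Fintype.card Z))

/-- `yn ∈ T_ε^n(Y | zn)[p]`: conditional strong typicality of `yn` given `zn`. -/
def condTypY {n : ℕ} (p : X × Y × Z → ℝ) (ε : ℝ) (zn : Fin n → Z) (yn : Fin n → Y) : Prop :=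
  ∀ y z, |(cnt2 yn zn y z : ℝ) / n - ∑ x, p (x, y, z)|
    < ε / ((Fintype.card Y : ℝ) * (Fintype.card Z))

/-- `(xn, yn, zn) ∈ T_ε^n(XYZ)[p]`: joint strong typicality of the triple.  (The same
condition also defines `(xn, yn) ∈ T_ε^n(XY | zn)[p]`, for the fixed sequence `zn`.) -/
def typ3 {n : ℕ} (p : X × Y × Z → ℝ) (ε : ℝ)
    (xn : Fin n → X) (yn : Fin n → Y) (zn : Fin n → Z) : Prop :=
  ∀ x y z, |(cnt3 xn yn zn x y z : ℝ) / n - p (x, y, z)|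
    < ε / ((Fintype.card X : ℝ) * (Fintype.card Y) * (Fintype.card Z))

/-- reverse Markov lemma: if for some `zⁿ` the conditional typical sets of `p`
factor, `T_ε^n(X|zⁿ)[p] × T_ε^n(Y|zⁿ)[p] = T_ε^n(XY|zⁿ)[p]`, this set being nonempty, and
`p'(x,y,z) = p_Z(z)·p(x|z)·p(y|z)` is the Markov chain built from `p`, then every pair with
`xⁿ ∈ T_ε^n(X|zⁿ)[p]`, `yⁿ ∈ T_ε^n(Y|zⁿ)[p]` gives `(xⁿ,yⁿ,zⁿ) ∈ T_ε^n(XYZ)[p]`, and if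
additionally `(xⁿ,yⁿ,zⁿ) ∈ T_ε^n(XYZ)[p']`, then `‖p − p'‖₁ < 2ε`. -/
theorem reverse_markov_lemma
    {n : ℕ} (hn : 1 ≤ n) {ε : ℝ} (hε : 0 < ε)
    (p p' : X × Y × Z → ℝ)
    (hp0 : ∀ a, 0 ≤ p a) (hp1 : ∑ a, p a = 1)
    (zn : Fin n → Z)
    (hp' : ∀ x y z, p' (x, y, z) =
      (∑ x', ∑ y', p (x', y', z)) *
        ((∑ y', p (x, y', z)) / (∑ x', ∑ y', p (x', y', z))) *
        ((∑ x', p (x', y, z)) / (∑ x', ∑ y', p (x', y', z))))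
    (hfac : ∀ (xn : Fin n → X) (yn : Fin n → Y),
      (condTypX p ε zn xn ∧ condTypY p ε zn yn) ↔ typ3 p ε xn yn zn)
    (hne : ∃ (xn : Fin n → X) (yn : Fin n → Y), typ3 p ε xn yn zn) :
    (∀ (xn : Fin n → X) (yn : Fin n → Y),
      condTypX p ε zn xn → condTypY p ε zn yn → typ3 p ε xn yn zn) ∧
    (∀ (xn : Fin n → X) (yn : Fin n → Y),
      condTypX p ε zn xn → condTypY p ε zn yn → typ3 p' ε xn yn zn →
      ∑ a, |p a - p' a| < 2 * ε) := by
  have h1 : ∀ (xn : Fin n → X) (yn : Fin n → Y),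
      condTypX p ε zn xn → condTypY p ε zn yn → typ3 p ε xn yn zn :=
    fun xn yn hx hy => (hfac xn yn).mp ⟨hx, hy⟩
  refine ⟨h1, ?_⟩
  intro xn yn hx hy hp'typ
  have ht := h1 xn yn hx hy
  have hXne : Nonempty X := ⟨xn ⟨0, hn⟩⟩
  have hYne : Nonempty Y := ⟨yn ⟨0, hn⟩⟩
  have hZne : Nonempty Z := ⟨zn ⟨0, hn⟩⟩
  have hcX : (0:ℝ) < Fintype.card X := by exact_mod_cast Fintype.card_pos
  have hcY : (0:ℝ) < Fintype.card Y := by exact_mod_cast Fintype.card_pos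
  have hcZ : (0:ℝ) < Fintype.card Z := by exact_mod_cast Fintype.card_pos
  set C : ℝ := (Fintype.card X : ℝ) * (Fintype.card Y) * (Fintype.card Z) with hC
  have hCpos : 0 < C := by positivity
  set δ : ℝ := ε / C with hδ
  have key : ∀ a : X × Y × Z, |p a - p' a| < 2 * δ := by
    rintro ⟨x, y, z⟩
    have ha := ht x y z
    have hb := hp'typ x y z
    have h3 : |p (x,y,z) - p' (x,y,z)| ≤
        |p (x,y,z) - (cnt3 xn yn zn x y z : ℝ) / n| +
        |(cnt3 xn yn zn x y z : ℝ) / n - p' (x,y,z)| := abs_sub_le _ _ _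
    rw [abs_sub_comm] at ha
    linarith
  calc ∑ a, |p a - p' a| < ∑ _a : X × Y × Z, 2 * δ :=
        Finset.sum_lt_sum_of_nonempty Finset.univ_nonempty (fun a _ => key a)
    _ = (Fintype.card (X × Y × Z) : ℝ) * (2 * δ) := by
        rw [Finset.sum_const, nsmul_eq_mul]; rfl
    _ = 2 * ε := by
        rw [Fintype.card_prod, Fintype.card_prod]
        push_cast
        field_simp [hδ, hC]
        rw [hδ, hC]
        field_simp


end
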